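/- arXiv:1811.05232 — 2 statements merged into one kernel-verified Lean document; each statement's English description precedes it below -/
import Mathlib

section
/- Let $\sigma_1, \dots, \sigma_L$ be activation functions with $\sigma_i$ being $\rho_i$-Lipschitz and $\sigma_i(0) = 0$, applied coordinatewise. Let $\mathcal{A} = (A_1, \dots, A_L)$ and $\mathcal{A}' = (A_1', \dots, A_L')$ be weight matrices with $\|A_i\|_\sigma \leq s_i$ and $\|A_i'\|_\sigma \leq s_i$ (spectral norms), and let $\mathcal{H}_{\mathcal{A}}(x) = \sigma_L(A_L \sigma_{L-1}(\cdots \sigma_1(A_1 x)))$. Then for any $x$ with $\|x\|_2 \leq B$, $\|\mathcal{H}_{\mathcal{A}}(x) - \mathcal{H}_{\mathcal{A}'}(x)\|_2 \leq \prod_{i=1}^L \rho_i s_i \cdot B \cdot \sum_{j=1}^L \frac{\|A_j - A_j'\|_\sigma}{s_j}$. -/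
lemma coord_lip {n : ℕ} (ρ : ℝ) (hρ : 0 ≤ ρ) (σ : ℝ → ℝ)
    (h : ∀ r r' : ℝ, |σ r - σ r'| ≤ ρ * |r - r'|)
    (u v w z : EuclideanSpace ℝ (Fin n)) (hw : ∀ j, w j = σ (u j)) (hz : ∀ j, z j = σ (v j)) :
    ‖w - z‖ ≤ ρ * ‖u - v‖ := by
  rw [EuclideanSpace.norm_eq, EuclideanSpace.norm_eq]
  rw [show ρ * Real.sqrt (∑ i, ‖(u - v) i‖ ^ 2) =
      Real.sqrt (ρ ^ 2 * ∑ i, ‖(u - v) i‖ ^ 2) by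
    rw [Real.sqrt_mul (by positivity), Real.sqrt_sq hρ]]
  apply Real.sqrt_le_sqrt
  rw [Finset.mul_sum]
  apply Finset.sum_le_sum
  intro i _
  have hwz : ‖(w - z) i‖ = |σ (u i) - σ (v i)| := by
    simp [PiLp.sub_apply, hw, hz, Real.norm_eq_abs]
  rw [hwz]
  have h2 : ‖(u - v) i‖ = |u i - v i| := rfl
  rw [h2, ← mul_pow]
  have := h (u i) (v i)
  nlinarith [abs_nonneg (σ (u i) - σ (v i)), abs_nonneg (u i - v i),
    mul_nonneg hρ (abs_nonneg (u i - v i))]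

lemma coord_norm {n : ℕ} (ρ : ℝ) (hρ : 0 ≤ ρ) (σ : ℝ → ℝ)
    (h : ∀ r r' : ℝ, |σ r - σ r'| ≤ ρ * |r - r'|) (hσ0 : σ 0 = 0)
    (u w : EuclideanSpace ℝ (Fin n)) (hw : ∀ j, w j = σ (u j)) :
    ‖w‖ ≤ ρ * ‖u‖ := by
  have := coord_lip ρ hρ σ h u 0 w 0 hw (by simp [hσ0])
  simpa using this

/-- A feed-forward network: `net d A σ n x` is the output of the first `n` layers on input
`x`, where layer `i` applies the linear map `A i` followed by the coordinatewise activation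
`σ i`. -/
noncomputable def net (d : ℕ → ℕ)
    (A : (i : ℕ) → EuclideanSpace ℝ (Fin (d i)) →L[ℝ] EuclideanSpace ℝ (Fin (d (i + 1))))
    (σ : ℕ → ℝ → ℝ) :
    (n : ℕ) → EuclideanSpace ℝ (Fin (d 0)) → EuclideanSpace ℝ (Fin (d n))
  | 0, x => x
  | (n + 1), x => WithLp.toLp 2 (fun j => σ n ((A n (net d A σ n x)) j))

lemma net_norm_le (d : ℕ → ℕ)
    (A : (i : ℕ) → EuclideanSpace ℝ (Fin (d i)) →L[ℝ] EuclideanSpace ℝ (Fin (d (i + 1))))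
    (σ : ℕ → ℝ → ℝ) (ρ s : ℕ → ℝ)
    (hρ : ∀ i, 0 ≤ ρ i)
    (hσ : ∀ i, ∀ r r' : ℝ, |σ i r - σ i r'| ≤ ρ i * |r - r'|)
    (hσ0 : ∀ i, σ i 0 = 0)
    (hs : ∀ i, 0 ≤ s i)
    (hA : ∀ i, ‖A i‖ ≤ s i)
    (B : ℝ) (x : EuclideanSpace ℝ (Fin (d 0))) (hx : ‖x‖ ≤ B) :
    ∀ n, ‖net d A σ n x‖ ≤ (∏ i ∈ Finset.range n, ρ i * s i) * B := by
  intro n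
  induction n with
  | zero => simpa [net] using hx
  | succ n ih =>
    have h1 : ‖net d A σ (n + 1) x‖ ≤ ρ n * ‖A n (net d A σ n x)‖ :=
      coord_norm (ρ n) (hρ n) (σ n) (hσ n) (hσ0 n) _ _ (fun j => rfl)
    have h2 : ‖A n (net d A σ n x)‖ ≤ s n * ‖net d A σ n x‖ :=
      le_trans ((A n).le_opNorm _) (by
        exact mul_le_mul_of_nonneg_right (hA n) (norm_nonneg _))
    have h3 := ih
    rw [Finset.prod_range_succ]
    calc ‖net d A σ (n + 1) x‖ ≤ ρ n * (s n * ‖net d A σ n x‖) :=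
          le_trans h1 (mul_le_mul_of_nonneg_left h2 (hρ n))
      _ ≤ ρ n * (s n * ((∏ i ∈ Finset.range n, ρ i * s i) * B)) := by
          apply mul_le_mul_of_nonneg_left _ (hρ n)
          exact mul_le_mul_of_nonneg_left h3 (hs n)
      _ = (∏ i ∈ Finset.range n, ρ i * s i) * (ρ n * s n) * B := by ring

/-- Lemma C.3: perturbation bound for networks.  If each activation `σᵢ` is `ρᵢ`-Lipschitz
with `σᵢ(0) = 0`, and the weight matrices of both networks have spectral norm at most `sᵢ`,
then on inputs of norm at most `B`,
`‖H_A(x) - H_{A'}(x)‖ ≤ ∏ᵢ ρᵢ sᵢ · B · ∑ⱼ ‖Aⱼ - Aⱼ'‖_σ / sⱼ`. -/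
theorem network_weight_perturbation_bound
    (L : ℕ) (d : ℕ → ℕ)
    (A A' : (i : ℕ) → EuclideanSpace ℝ (Fin (d i)) →L[ℝ] EuclideanSpace ℝ (Fin (d (i + 1))))
    (σ : ℕ → ℝ → ℝ) (ρ s : ℕ → ℝ)
    (hρ : ∀ i, 0 ≤ ρ i)
    (hσ : ∀ i, ∀ r r' : ℝ, |σ i r - σ i r'| ≤ ρ i * |r - r'|)
    (hσ0 : ∀ i, σ i 0 = 0)
    (hs : ∀ i, 0 < s i)
    (hA : ∀ i, ‖A i‖ ≤ s i) (hA' : ∀ i, ‖A' i‖ ≤ s i)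
    (B : ℝ) (x : EuclideanSpace ℝ (Fin (d 0))) (hx : ‖x‖ ≤ B) :
    ‖net d A σ L x - net d A' σ L x‖ ≤
      (∏ i ∈ Finset.range L, ρ i * s i) * B *
        ∑ j ∈ Finset.range L, ‖A j - A' j‖ / s j := by
  induction L with
  | zero => simp [net]
  | succ n ih =>
    set P : ℝ := ∏ i ∈ Finset.range n, ρ i * s i with hP
    have hPnn : 0 ≤ P := Finset.prod_nonneg fun i _ =>
      mul_nonneg (hρ i) (hs i).le
    have hBnn : 0 ≤ B := le_trans (norm_nonneg _) hx
    set y := net d A σ n x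
    set y' := net d A' σ n x
    have h1 : ‖net d A σ (n + 1) x - net d A' σ (n + 1) x‖ ≤
        ρ n * ‖A n y - A' n y'‖ :=
      coord_lip (ρ n) (hρ n) (σ n) (hσ n) (A n y) (A' n y') _ _
        (fun j => rfl) (fun j => rfl)
    have h2 : ‖A n y - A' n y'‖ ≤ ‖A n - A' n‖ * ‖y‖ + s n * ‖y - y'‖ := by
      have : A n y - A' n y' = (A n - A' n) y + A' n (y - y') := by
        simp only [ContinuousLinearMap.sub_apply, map_sub]
        abel
      rw [this]
      refine le_trans (norm_add_le _ _) (add_le_add ((A n - A' n).le_opNorm _) ?_)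
      refine le_trans ((A' n).le_opNorm _) ?_
      exact mul_le_mul_of_nonneg_right (hA' n) (norm_nonneg _)
    have hy : ‖y‖ ≤ P * B := net_norm_le d A σ ρ s hρ hσ hσ0 (fun i => (hs i).le) hA B x hx n
    have hprod : ∏ i ∈ Finset.range (n+1), ρ i * s i = P * (ρ n * s n) := by
      rw [Finset.prod_range_succ]
    rw [hprod, Finset.sum_range_succ]
    have key : ‖net d A σ (n + 1) x - net d A' σ (n + 1) x‖ ≤
        ρ n * (‖A n - A' n‖ * (P * B) + s n * (P * B * ∑ j ∈ Finset.range n, ‖A j - A' j‖ / s j)) := by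
      refine le_trans h1 (mul_le_mul_of_nonneg_left ?_ (hρ n))
      refine le_trans h2 (add_le_add ?_ ?_)
      · exact mul_le_mul_of_nonneg_left hy (norm_nonneg _)
      · exact mul_le_mul_of_nonneg_left ih (hs n).le
    refine le_trans key (le_of_eq ?_)
    have hsn : s n ≠ 0 := (hs n).ne'
    field_simp
    ring
end

section
/- Let $\mathcal{Z} = \mathcal{X} \times \{-1,+1\}$ with $\mathcal{X} = \{x \in \mathbb{R}^d : \|x\|_2 \leq r\}$, and the metric $d_{\mathcal{Z}}((x,y),(x',y')) = \|x-x'\|_2 + \mathbf{1}[y \neq y']$. Fix $w \in \mathbb{R}^d$ and define the hinge-loss function $f(x,y) = \max\{0, 1 - y\, w \cdot x\}$. Then for all $z = (x,y)$ and $z' = (x',y')$ in $\mathcal{Z}$, $f(z') - f(z) \leq \max\{2y\, w\cdot x,\ \|w\|_2\} \cdot d_{\mathcal{Z}}(z,z')$ whenever $\max\{2y\,w\cdot x, \|w\|_2\} \geq 0$; in particular $f(z') - f(z) \leq \max\{2|w\cdot x|, \|w\|_2\}\, d_{\mathcal{Z}}(z,z')$. -/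
lemma hinge_aux
    (dm : ℕ) (w x x' : EuclideanSpace ℝ (Fin dm))
    (y y' : ℝ) (hy : y = 1 ∨ y = -1) (hy' : y' = 1 ∨ y' = -1)
    (M : ℝ) (hM1 : 2 * y * (inner ℝ w x : ℝ) ≤ M) (hM2 : ‖w‖ ≤ M) (hM0 : 0 ≤ M) :
    max 0 (1 - y' * (inner ℝ w x' : ℝ)) - max 0 (1 - y * (inner ℝ w x : ℝ)) ≤
      M * (‖x - x'‖ + if y = y' then 0 else 1) := by
  set c : ℝ := inner ℝ w x with hc
  set c' : ℝ := inner ℝ w x' with hc'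
  have hnorm : 0 ≤ ‖x - x'‖ := norm_nonneg _
  have hin : |(inner ℝ w (x - x') : ℝ)| ≤ ‖w‖ * ‖x - x'‖ := abs_real_inner_le_norm w (x - x')
  have hsub : (inner ℝ w (x - x') : ℝ) = c - c' := by
    rw [inner_sub_right]
  rw [hsub] at hin
  have habs := abs_le.mp hin
  have step1 : max 0 (1 - y' * c') - max 0 (1 - y * c) ≤ max 0 (y * c - y' * c') := by
    rcases le_total (1 - y' * c') 0 with h | h
    · have h1 : max 0 (1 - y' * c') = 0 := max_eq_left h
      have := le_max_left (0:ℝ) (1 - y * c)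
      have := le_max_left (0:ℝ) (y * c - y' * c')
      linarith
    · have h1 : max 0 (1 - y' * c') = 1 - y' * c' := max_eq_right h
      have h2 := le_max_right (0:ℝ) (1 - y * c)
      have h3 := le_max_right (0:ℝ) (y * c - y' * c')
      linarith
  have step2 : max 0 (y * c - y' * c') ≤ M * (‖x - x'‖ + if y = y' then 0 else 1) := by
    by_cases heq : y = y'
    · rw [if_pos heq, add_zero]
      apply max_le
      · positivity
      · subst heq
        have hwn : ‖w‖ * ‖x - x'‖ ≤ M * ‖x - x'‖ :=
          mul_le_mul_of_nonneg_right hM2 hnorm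
        rcases hy with h | h <;> subst h <;> nlinarith [habs.1, habs.2]
    · rw [if_neg heq]
      have hy'' : y' = -y := by
        rcases hy with h | h <;> rcases hy' with h' | h' <;> subst h <;> subst h' <;> norm_num at heq <;> norm_num
      subst hy''
      have hwn : ‖w‖ * ‖x - x'‖ ≤ M * ‖x - x'‖ :=
        mul_le_mul_of_nonneg_right hM2 hnorm
      apply max_le
      · positivity
      · rcases hy with h | h <;> subst h <;> nlinarith [habs.1, habs.2]
  linarith

/-- Verification of the weak Lipschitz condition (Assumption 3) for the SVM hinge loss
`f(x,y) = max{0, 1 - y ⟨w, x⟩}` with the metric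
`d_Z((x,y),(x',y')) = ‖x - x'‖₂ + 1[y ≠ y']`. -/
theorem hinge_loss_weak_lipschitz
    (dm : ℕ) (r : ℝ) (hr : 0 < r) (w : EuclideanSpace ℝ (Fin dm))
    (x x' : EuclideanSpace ℝ (Fin dm)) (hx : ‖x‖ ≤ r) (hx' : ‖x'‖ ≤ r)
    (y y' : ℝ) (hy : y = 1 ∨ y = -1) (hy' : y' = 1 ∨ y' = -1) :
    ((0 : ℝ) ≤ max (2 * y * (inner ℝ w x : ℝ)) ‖w‖ →
      max 0 (1 - y' * (inner ℝ w x' : ℝ)) - max 0 (1 - y * (inner ℝ w x : ℝ)) ≤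
        max (2 * y * (inner ℝ w x : ℝ)) ‖w‖ *
          (‖x - x'‖ + if y = y' then 0 else 1)) ∧
    max 0 (1 - y' * (inner ℝ w x' : ℝ)) - max 0 (1 - y * (inner ℝ w x : ℝ)) ≤
      max (2 * |(inner ℝ w x : ℝ)|) ‖w‖ * (‖x - x'‖ + if y = y' then 0 else 1) := by
  constructor
  · intro hM0
    exact hinge_aux dm w x x' y y' hy hy' _ (le_max_left _ _) (le_max_right _ _) hM0
  · apply hinge_aux dm w x x' y y' hy hy'
    · have : 2 * y * (inner ℝ w x : ℝ) ≤ 2 * |(inner ℝ w x : ℝ)| := by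
        rcases hy with h | h <;> subst h <;>
          nlinarith [le_abs_self (inner ℝ w x : ℝ), neg_abs_le (inner ℝ w x : ℝ)]
      exact le_trans this (le_max_left _ _)
    · exact le_max_right _ _
    · exact le_trans (norm_nonneg w) (le_max_right _ _)
end
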